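/- For every integer j ≥ 1, ∫_{0}^{1} ( 2ρ/(1+ρ²) )^{2j+1} ρ dρ = −2/(2j−1) + ((2j+1)π / (4^j · j)) · C(2j−2, j−1), where C(n,k) denotes the binomial coefficient. -/

import Mathlib

open Real intervalIntegral Set

lemma wallis_even' (n : ℕ) :
    (∫ x in (0:ℝ)..(Real.pi/2), Real.sin x ^ (2*n)) =
      Real.pi / 2 * ((2*n).choose n : ℝ) / 4 ^ n := by
  induction n with
  | zero => simp
  | succ k ih =>
    have h : 2 * (k+1) = 2*k + 2 := by ring
    rw [h, integral_sin_pow, ih]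
    have hc : ((k:ℝ)+1) * (((2*k+2).choose (k+1) : ℕ) : ℝ)
        = 2*(2*(k:ℝ)+1) * (((2*k).choose k : ℕ) : ℝ) := by
      have := congrArg (Nat.cast (R := ℝ)) (Nat.succ_mul_centralBinom_succ k)
      push_cast [Nat.centralBinom] at this
      rw [show 2*k+2 = 2*(k+1) by ring]
      convert this using 3
    rw [Real.sin_zero, Real.cos_pi_div_two, zero_pow (by omega : 2*k+1 ≠ 0)]
    push_cast
    have h4 : (0:ℝ) < 4^k := by positivity
    field_simp
    linear_combination (-2 * Real.pi * 4^k) * hc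

lemma sin_pow_mul_cos' (m : ℕ) :
    (∫ x in (0:ℝ)..(Real.pi/2), Real.sin x ^ m * Real.cos x) = 1/((m:ℝ)+1) := by
  have h := integral_sin_pow_mul_cos_pow_odd (a := (0:ℝ)) (b := Real.pi/2) m 0
  simp only [mul_zero, zero_add, pow_one, pow_zero, mul_one, Real.sin_zero,
    Real.sin_pi_div_two] at h
  rw [h, integral_pow]
  simp

lemma rho_to_half_angle (n : ℕ) :
    (∫ ρ in (0 : ℝ)..1, (2 * ρ / (1 + ρ ^ 2)) ^ (2 * n + 3) * ρ)
      = ∫ x in (0:ℝ)..(Real.pi/2), Real.sin x ^ (2*n) * (1 - Real.cos x)^2 := by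
  have hg : Continuous (fun ρ : ℝ => (2 * ρ / (1 + ρ ^ 2)) ^ (2 * n + 3) * ρ) := by
    apply Continuous.mul _ continuous_id
    apply Continuous.pow
    exact (continuous_const.mul continuous_id).div (by fun_prop)
      (fun x => by positivity)
  have hd : ∀ x ∈ uIcc (0:ℝ) (Real.pi/4), HasDerivAt Real.tan (1/Real.cos x^2) x := by
    intro x hx
    rw [uIcc_of_le (by positivity)] at hx
    refine Real.hasDerivAt_tan (ne_of_gt (Real.cos_pos_of_mem_Ioo ⟨?_, ?_⟩))
    · linarith [hx.1, Real.pi_pos]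
    · have := Real.pi_pos; linarith [hx.2]
  have hcc : ContinuousOn (fun x => 1/Real.cos x^2) (uIcc (0:ℝ) (Real.pi/4)) := by
    apply ContinuousOn.div continuousOn_const (by fun_prop)
    intro x hx
    rw [uIcc_of_le (by positivity)] at hx
    have : 0 < Real.cos x := Real.cos_pos_of_mem_Ioo
      ⟨by linarith [hx.1, Real.pi_pos], by have := Real.pi_pos; linarith [hx.2]⟩
    positivity
  have hsub := integral_comp_smul_deriv hd hcc hg
  rw [Real.tan_zero, Real.tan_pi_div_four] at hsub
  rw [← hsub]
  have heq : EqOn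
      (fun x => (1/Real.cos x^2) •
        ((fun ρ : ℝ => (2 * ρ / (1 + ρ ^ 2)) ^ (2 * n + 3) * ρ) ∘ Real.tan) x)
      (fun x => 2 * (Real.sin (2*x) ^ (2*n) * (1 - Real.cos (2*x))^2))
      (uIcc (0:ℝ) (Real.pi/4)) := by
    intro x hx
    rw [uIcc_of_le (by positivity)] at hx
    have hcx : 0 < Real.cos x := Real.cos_pos_of_mem_Ioo
      ⟨by linarith [hx.1, Real.pi_pos], by have := Real.pi_pos; linarith [hx.2]⟩
    have hc : Real.cos x ≠ 0 := ne_of_gt hcx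
    have hpy : Real.sin x ^ 2 + Real.cos x ^ 2 = 1 := Real.sin_sq_add_cos_sq x
    have h1 : 2 * Real.tan x / (1 + Real.tan x ^ 2) = Real.sin (2*x) := by
      rw [Real.tan_eq_sin_div_cos, Real.sin_two_mul]
      field_simp
      linear_combination (-Real.sin x) * hpy
    have h2 : 1 - Real.cos (2*x) = 2 * Real.sin x ^ 2 := by
      rw [Real.cos_two_mul]; nlinarith [hpy]
    simp only [Function.comp_apply, smul_eq_mul]
    rw [h1, h2, Real.tan_eq_sin_div_cos, Real.sin_two_mul, pow_add, mul_pow]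
    field_simp
  rw [intervalIntegral.integral_congr heq, intervalIntegral.integral_const_mul,
    intervalIntegral.integral_comp_mul_left
      (fun y => Real.sin y ^ (2*n) * (1 - Real.cos y)^2) (two_ne_zero)]
  rw [show (2:ℝ)*0 = 0 by ring, show (2:ℝ)*(Real.pi/4) = Real.pi/2 by ring, smul_eq_mul]
  ring

/-- For `j ≥ 1`,
`∫₀¹ (2ρ/(1+ρ²))^{2j+1} ρ dρ = −2/(2j−1) + ((2j+1)π/(4^j j)) C(2j−2, j−1)`. -/
theorem integral_rho_power (j : ℕ) (hj : 1 ≤ j) :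
    (∫ ρ in (0 : ℝ)..1, (2 * ρ / (1 + ρ ^ 2)) ^ (2 * j + 1) * ρ) =
    -2 / (2 * (j : ℝ) - 1)
      + ((2 * (j : ℝ) + 1) * Real.pi / (4 ^ j * (j : ℝ))) * ((2 * j - 2).choose (j - 1) : ℝ) := by
  obtain ⟨n, rfl⟩ : ∃ n, j = n + 1 := ⟨j - 1, by omega⟩
  rw [show 2 * (n+1) + 1 = 2*n + 3 by ring, rho_to_half_angle n]
  have hsplit : (∫ x in (0:ℝ)..(Real.pi/2), Real.sin x ^ (2*n) * (1 - Real.cos x)^2)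
      = (∫ x in (0:ℝ)..(Real.pi/2),
          (2 * Real.sin x ^ (2*n) - 2 * (Real.sin x ^ (2*n) * Real.cos x)
            - Real.sin x ^ (2*(n+1)))) := by
    apply intervalIntegral.integral_congr
    intro x _
    have hpy : Real.sin x ^ 2 + Real.cos x ^ 2 = 1 := Real.sin_sq_add_cos_sq x
    simp only
    rw [show 2*(n+1) = 2*n + 2 by ring, pow_add]
    linear_combination (Real.sin x ^ (2*n)) * hpy
  have i1 : IntervalIntegrable (fun x => 2 * Real.sin x ^ (2*n)
      - 2 * (Real.sin x ^ (2*n) * Real.cos x)) MeasureTheory.volume 0 (Real.pi/2) :=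
    (Continuous.intervalIntegrable (by fun_prop) _ _)
  have i2 : IntervalIntegrable (fun x => Real.sin x ^ (2*(n+1)))
      MeasureTheory.volume 0 (Real.pi/2) :=
    (Continuous.intervalIntegrable (by fun_prop) _ _)
  have i3 : IntervalIntegrable (fun x => 2 * Real.sin x ^ (2*n))
      MeasureTheory.volume 0 (Real.pi/2) :=
    (Continuous.intervalIntegrable (by fun_prop) _ _)
  have i4 : IntervalIntegrable (fun x => 2 * (Real.sin x ^ (2*n) * Real.cos x))
      MeasureTheory.volume 0 (Real.pi/2) :=
    (Continuous.intervalIntegrable (by fun_prop) _ _)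
  rw [hsplit, intervalIntegral.integral_sub i1 i2, intervalIntegral.integral_sub i3 i4,
    intervalIntegral.integral_const_mul, intervalIntegral.integral_const_mul,
    wallis_even' n, wallis_even' (n+1), sin_pow_mul_cos' (2*n)]
  rw [show 2*(n+1) - 2 = 2*n by omega, show (n+1) - 1 = n by omega]
  have hc : ((n:ℝ)+1) * (((2*(n+1)).choose (n+1) : ℕ) : ℝ)
      = 2*(2*(n:ℝ)+1) * (((2*n).choose n : ℕ) : ℝ) := by
    have := congrArg (Nat.cast (R := ℝ)) (Nat.succ_mul_centralBinom_succ n)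
    push_cast [Nat.centralBinom] at this
    convert this using 3
  push_cast
  have h4 : ((4:ℝ)^n) ≠ 0 := by positivity
  have h2n : (2*(n:ℝ)+1) ≠ 0 := by positivity
  have hn1 : ((n:ℝ)+1) ≠ 0 := by positivity
  rw [show (2*((n:ℝ)+1) - 1 : ℝ) = 2*(n:ℝ)+1 from by ring]
  field_simp
  linear_combination (-Real.pi * (2*(n:ℝ)+1) * 4^n) * hc
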